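/- Let G = (Q ⋊ C_p) × (C_r ⋊ C_t) where p, q, r, t are distinct primes, q | p−1, t | r−1, Q is an elementary abelian q-group that is a faithful simple module for C_p, and C_r ⋊ C_t is nonabelian of order rt. Let A = C_t (the chosen complement), B a subgroup of order q in Q, H = A × B, and T a subgroup of order t with T ≠ A. Then HT ≠ TH; in particular H does not permute with T. -/

import Mathlib

open scoped Pointwise

/-- in `G = (Q ⋊ C_p) × (C_r ⋊ C_t)`, with `A` the chosen complement of
order `t`, `B ≤ Q` of order `q`, `H = A × B = A ⊔ B`, and `T` a subgroup of order `t`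
with `T ≠ A`, the subgroups `H` and `T` do not permute. -/
theorem stmt_14 (p q r t : ℕ) (hp : p.Prime) (hq : q.Prime) (hr : r.Prime)
    (ht : t.Prime) (hdistinct : p ≠ q ∧ p ≠ r ∧ p ≠ t ∧ q ≠ r ∧ q ≠ t ∧ r ≠ t)
    (hqp : q ∣ p - 1) (htr : t ∣ r - 1)
    (Qg Cp Cr Ct : Type*) [Group Qg] [Group Cp] [Group Cr] [Group Ct]
    [Finite Qg] [Finite Cp] [Finite Cr] [Finite Ct]
    (hQel : (∀ x : Qg, x ^ q = 1) ∧ (∀ x y : Qg, x * y = y * x))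
    (hQnt : Nat.card Qg ≠ 1)
    (hCp : Nat.card Cp = p) (hCr : Nat.card Cr = r) (hCt : Nat.card Ct = t)
    (φ : Cp →* MulAut Qg) (hfaith : Function.Injective φ)
    (hsimple : ∀ S : Subgroup Qg, (∀ (c : Cp), ∀ x ∈ S, φ c x ∈ S) → S = ⊥ ∨ S = ⊤)
    (ψ : Ct →* MulAut Cr)
    (hnonab : ¬ ∀ x y : Cr ⋊[ψ] Ct, x * y = y * x)
    (A B H T : Subgroup ((Qg ⋊[φ] Cp) × (Cr ⋊[ψ] Ct)))
    (hA : A = ((MonoidHom.inr (Qg ⋊[φ] Cp) (Cr ⋊[ψ] Ct)).comp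
      SemidirectProduct.inr).range)
    (hB : B ≤ ((MonoidHom.inl (Qg ⋊[φ] Cp) (Cr ⋊[ψ] Ct)).comp
      SemidirectProduct.inl).range)
    (hBcard : Nat.card B = q)
    (hH : H = A ⊔ B)
    (hTcard : Nat.card T = t) (hTA : T ≠ A) :
    (H : Set ((Qg ⋊[φ] Cp) × (Cr ⋊[ψ] Ct))) * (T : Set ((Qg ⋊[φ] Cp) × (Cr ⋊[ψ] Ct))) ≠
      (T : Set ((Qg ⋊[φ] Cp) × (Cr ⋊[ψ] Ct))) * (H : Set ((Qg ⋊[φ] Cp) × (Cr ⋊[ψ] Ct))) := by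
  obtain ⟨hpq, hpr, hpt, hqr, hqt, hrt⟩ := hdistinct
  intro hcomm
  set G1 := Qg ⋊[φ] Cp with hG1def
  set G2 := Cr ⋊[ψ] Ct with hG2def
  -- basic finiteness and cardinalities
  have e1 : G1 ≃ Qg × Cp :=
    ⟨fun x => (x.left, x.right), fun x => ⟨x.1, x.2⟩, fun x => rfl, fun x => rfl⟩
  have e2 : G2 ≃ Cr × Ct :=
    ⟨fun x => (x.left, x.right), fun x => ⟨x.1, x.2⟩, fun x => rfl, fun x => rfl⟩
  have fin1 : Finite G1 := Finite.of_equiv _ e1.symm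
  have fin2 : Finite G2 := Finite.of_equiv _ e2.symm
  have hcardG1 : Nat.card G1 = Nat.card Qg * p := by
    rw [Nat.card_congr e1, Nat.card_prod, hCp]
  have hcardG2 : Nat.card G2 = r * t := by
    rw [Nat.card_congr e2, Nat.card_prod, hCr, hCt]
  -- t does not divide |G1|
  have htG1 : ¬ t ∣ Nat.card G1 := by
    rw [hcardG1]
    intro h
    rcases (Nat.Prime.dvd_mul ht).mp h with h | h
    · haveI : Fact t.Prime := ⟨ht⟩
      obtain ⟨x, hx⟩ := exists_prime_orderOf_dvd_card' (G := Qg) t h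
      have hdq : orderOf x ∣ q := orderOf_dvd_of_pow_eq_one (hQel.1 x)
      rw [hx] at hdq
      exact hqt ((Nat.prime_dvd_prime_iff_eq ht hq).mp hdq).symm
    · exact hpt ((Nat.prime_dvd_prime_iff_eq ht hp).mp h).symm
  -- the first projection of T is trivial
  have hTfst : T.map (MonoidHom.fst G1 G2) = ⊥ := by
    have hdvdt : Nat.card (T.map (MonoidHom.fst G1 G2)) ∣ t :=
      hTcard ▸ Subgroup.card_dvd_of_surjective ((MonoidHom.fst G1 G2).subgroupMap T)
        (MonoidHom.subgroupMap_surjective _ _)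
    have hdvdG1 : Nat.card (T.map (MonoidHom.fst G1 G2)) ∣ Nat.card G1 :=
      Subgroup.card_subgroup_dvd_card _
    rw [← Subgroup.card_eq_one]
    rcases (Nat.Prime.eq_one_or_self_of_dvd ht _ hdvdt) with h | h
    · exact h
    · exact absurd (h ▸ hdvdG1) htG1
  have hT1 : ∀ x ∈ T, (x : G1 × G2).1 = 1 := by
    intro x hx
    have : (x : G1 × G2).1 ∈ T.map (MonoidHom.fst G1 G2) :=
      Subgroup.mem_map.mpr ⟨x, hx, rfl⟩
    rwa [hTfst, Subgroup.mem_bot] at this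
  set snd := MonoidHom.snd G1 G2 with hsnddef
  set inr := MonoidHom.inr G1 G2 with hinrdef
  have hinr_inj : Function.Injective inr := fun a b h => congrArg Prod.snd h
  set T' := T.map snd with hT'def
  have key : ∀ y ∈ T, inr (snd y) = y := by
    intro y hy
    have h1 := hT1 y hy
    exact Prod.ext (by simp [hinrdef, h1]) rfl
  have hTinr : T'.map inr = T := by
    rw [hT'def, Subgroup.map_map]
    ext x
    constructor
    · intro h
      obtain ⟨y, hy, rfl⟩ := Subgroup.mem_map.mp h
      simpa [MonoidHom.comp_apply, key y hy] using hy
    · intro h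
      exact Subgroup.mem_map.mpr ⟨x, h, key x h⟩
  set A' : Subgroup G2 := (SemidirectProduct.inr : Ct →* G2).range with hA'def
  have hAinr : A'.map inr = A := by rw [hA, MonoidHom.range_comp]
  have hT'A' : T' ≠ A' := fun h => hTA (by rw [← hTinr, h, hAinr])
  have hcardA' : Nat.card A' = t := by
    rw [← hCt]
    exact (Nat.card_congr (Equiv.ofInjective _
      (SemidirectProduct.inr_injective (φ := ψ)))).symm
  have hcardT' : Nat.card T' = t := by
    rw [← hTinr] at hTcard
    rw [← hTcard]
    exact Nat.card_congr (Subgroup.equivMapOfInjective T' inr hinr_inj).toEquiv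
  -- project the commuting relation to G2
  have himg := congrArg (Set.image snd) hcomm
  rw [Set.image_mul, Set.image_mul, ← Subgroup.coe_map, ← Subgroup.coe_map] at himg
  have hHsnd : H.map snd = A' := by
    rw [hH, Subgroup.map_sup]
    have hAs : A.map snd = A' := by
      rw [← hAinr, Subgroup.map_map, MonoidHom.snd_comp_inr, Subgroup.map_id]
    have hBs : B.map snd = ⊥ := by
      rw [Subgroup.map_eq_bot_iff]
      intro x hx
      obtain ⟨y, hy⟩ := hB hx
      rw [MonoidHom.mem_ker, ← hy]
      rfl
    rw [hAs, hBs, sup_bot_eq]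
  rw [hHsnd] at himg
  -- himg : ↑A' * ↑T' = ↑T' * ↑A'
  have hinf : A' ⊓ T' = ⊥ := by
    by_contra hne
    have h1 : Nat.card (A' ⊓ T' : Subgroup G2) ∣ t :=
      hcardA' ▸ Subgroup.card_dvd_of_le inf_le_left
    rcases Nat.Prime.eq_one_or_self_of_dvd ht _ h1 with h | h
    · exact hne (Subgroup.card_eq_one.mp h)
    · have hle : A' ⊓ T' = A' :=
        Subgroup.eq_of_le_of_card_ge inf_le_left (by rw [h, hcardA'])
      have hAT : A' ≤ T' := hle ▸ inf_le_right
      have : A' = T' := Subgroup.eq_of_le_of_card_ge hAT (by rw [hcardT', hcardA'])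
      exact hT'A' this.symm
  -- the set A' * T' is a subgroup
  let K : Subgroup G2 :=
    { carrier := (↑A' * ↑T' : Set G2)
      one_mem' := ⟨1, one_mem A', 1, one_mem T', mul_one 1⟩
      mul_mem' := by
        rintro x y ⟨a1, ha1, b1, hb1, rfl⟩ ⟨a2, ha2, b2, hb2, rfl⟩
        have hmem : b1 * a2 ∈ (↑A' * ↑T' : Set G2) := by
          rw [himg]; exact Set.mul_mem_mul hb1 ha2
        obtain ⟨a3, ha3, b3, hb3, h3⟩ := hmem
        have h3' : a3 * b3 = b1 * a2 := h3
        refine ⟨a1 * a3, mul_mem ha1 ha3, b3 * b2, mul_mem hb3 hb2, ?_⟩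
        calc a1 * a3 * (b3 * b2) = a1 * (a3 * b3) * b2 := by group
          _ = a1 * (b1 * a2) * b2 := by rw [h3']
          _ = a1 * b1 * (a2 * b2) := by group
      inv_mem' := by
        rintro x ⟨a, ha, b, hb, rfl⟩
        have hmem : b⁻¹ * a⁻¹ ∈ (↑A' * ↑T' : Set G2) := by
          rw [himg]; exact Set.mul_mem_mul (inv_mem hb) (inv_mem ha)
        simpa [mul_inv_rev] using hmem }
  have hKcard : Nat.card K = t * t := by
    have hbij : Function.Bijective
        (fun z : A' × T' => (⟨(z.1 : G2) * (z.2 : G2),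
          Set.mul_mem_mul z.1.2 z.2.2⟩ : K)) := by
      constructor
      · rintro ⟨⟨a1, ha1⟩, ⟨b1, hb1⟩⟩ ⟨⟨a2, ha2⟩, ⟨b2, hb2⟩⟩ hEq
        have h : a1 * b1 = a2 * b2 := congrArg Subtype.val hEq
        have hkey : a2⁻¹ * a1 = b2 * b1⁻¹ := by
          rw [@inv_mul_eq_iff_eq_mul G2 _, ← mul_assoc, @eq_mul_inv_iff_mul_eq G2 _]
          exact h
        have hmemi : a2⁻¹ * a1 ∈ A' ⊓ T' :=
          ⟨A'.mul_mem (A'.inv_mem ha2) ha1, hkey ▸ T'.mul_mem hb2 (T'.inv_mem hb1)⟩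
        rw [hinf, Subgroup.mem_bot] at hmemi
        have ha : a1 = a2 := by
          have := hmemi
          rw [@inv_mul_eq_one G2 _] at this
          exact this.symm
        have hb : b1 = b2 := mul_left_cancel (a := a1) (by rw [h, ha])
        simp [ha, hb]
      · rintro ⟨x, hx⟩
        obtain ⟨a, ha, b, hb, rfl⟩ := hx
        exact ⟨(⟨a, ha⟩, ⟨b, hb⟩), rfl⟩
    have := Nat.card_congr (Equiv.ofBijective _ hbij)
    rw [Nat.card_prod, hcardA', hcardT'] at this
    exact this.symm
  have hdvd : Nat.card K ∣ Nat.card G2 := Subgroup.card_subgroup_dvd_card K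
  rw [hKcard, hcardG2] at hdvd
  have htdr : t ∣ r := by
    have h' : t * t ∣ t * r := by rwa [mul_comm r t] at hdvd
    exact (mul_dvd_mul_iff_left (Nat.Prime.ne_zero ht)).mp h'
  exact hrt ((Nat.prime_dvd_prime_iff_eq ht hr).mp htdr).symm
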